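/- There exists a constant C > 0 such that for every ε > 0, every function u : ℤ³ → ℂ with u(0) = 0 and |u(α)| ≤ ε/|α|² for all α ≠ 0, and every k ∈ ℤ³ with k ≠ 0, one has |k|·Σ_{α ∈ ℤ³, |α| > 2|k|} |u(α)|·|u(k−α)| ≤ C·ε². -/

import Mathlib

/-- The Euclidean norm of a lattice point in `ℤ³`. -/
noncomputable def znorm (a : Fin 3 → ℤ) : ℝ := Real.sqrt (∑ i, ((a i : ℝ)) ^ 2)

noncomputable def emb (a : Fin 3 → ℤ) : EuclideanSpace ℝ (Fin 3) := WithLp.toLp 2 (fun i => (a i : ℝ))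

lemma znorm_eq (a : Fin 3 → ℤ) : znorm a = ‖emb a‖ := by
  rw [EuclideanSpace.norm_eq]; simp [znorm, emb, sq_abs]

lemma znorm_nonneg (a : Fin 3 → ℤ) : 0 ≤ znorm a := Real.sqrt_nonneg _

lemma znorm_triangle (k a : Fin 3 → ℤ) : znorm a - znorm k ≤ znorm (k - a) := by
  have h : emb (k - a) = emb k - emb a := by
    ext i; simp [emb, Pi.sub_apply]
  rw [znorm_eq, znorm_eq, znorm_eq, h, ← norm_neg (emb k - emb a), neg_sub]
  exact norm_sub_norm_le _ _

lemma one_le_znorm {a : Fin 3 → ℤ} (ha : a ≠ 0) : 1 ≤ znorm a := by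
  obtain ⟨i, hi⟩ : ∃ i, a i ≠ 0 := by
    by_contra h; push_neg at h; exact ha (funext h)
  have h1 : (1 : ℝ) ≤ ∑ i, ((a i : ℝ)) ^ 2 := by
    have h0 : (1 : ℝ) ≤ ((a i : ℝ)) ^ 2 := by
      have : (1 : ℤ) ≤ (a i) ^ 2 := by rcases lt_or_gt_of_ne hi with h | h <;> nlinarith
      exact_mod_cast this
    calc (1:ℝ) ≤ ((a i : ℝ))^2 := h0
      _ ≤ ∑ j, ((a j : ℝ))^2 := Finset.single_le_sum (f := fun j => ((a j : ℝ))^2)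
          (fun j _ => sq_nonneg _) (Finset.mem_univ i)
  calc (1:ℝ) = Real.sqrt 1 := by simp
    _ ≤ znorm a := Real.sqrt_le_sqrt h1

noncomputable def supN (a : Fin 3 → ℤ) : ℕ := Finset.univ.sup fun i => (a i).natAbs

lemma supN_le_znorm (a : Fin 3 → ℤ) : (supN a : ℝ) ≤ znorm a := by
  obtain ⟨i, hi⟩ := Finset.exists_mem_eq_sup Finset.univ Finset.univ_nonempty
    (fun i => (a i).natAbs)
  have h2 : ((supN a : ℝ)) ^ 2 ≤ ∑ j, ((a j : ℝ)) ^ 2 := by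
    have : ((supN a : ℝ)) ^ 2 = ((a i : ℝ)) ^ 2 := by
      rw [supN, hi.2]
      simp [Nat.cast_natAbs, sq_abs]
    rw [this]
    exact Finset.single_le_sum (f := fun j => ((a j : ℝ))^2)
      (fun j _ => sq_nonneg _) (Finset.mem_univ i)
  have := Real.sqrt_le_sqrt h2
  rwa [Real.sqrt_sq (by positivity)] at this

lemma znorm_le_two_supN (a : Fin 3 → ℤ) : znorm a ≤ 2 * supN a := by
  have hb : ∀ j, ((a j : ℝ)) ^ 2 ≤ ((supN a : ℝ)) ^ 2 := by
    intro j
    have h1 : (a j).natAbs ≤ supN a :=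
      Finset.le_sup (f := fun i => (a i).natAbs) (Finset.mem_univ j)
    have h2 : |(a j : ℝ)| ≤ (supN a : ℝ) := by
      rw [← Int.cast_abs, Int.abs_eq_natAbs]; exact_mod_cast h1
    nlinarith [abs_nonneg ((a j : ℝ)), sq_abs ((a j:ℝ))]
  have hsum : ∑ j, ((a j : ℝ)) ^ 2 ≤ 3 * ((supN a : ℝ)) ^ 2 := by
    rw [Fin.sum_univ_three]
    linarith [hb 0, hb 1, hb 2]
  have : znorm a ≤ Real.sqrt (3 * ((supN a : ℝ)) ^ 2) := Real.sqrt_le_sqrt hsum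
  refine this.trans ?_
  rw [show (2 : ℝ) * supN a = Real.sqrt ((2 * supN a)^2) from (Real.sqrt_sq (by positivity)).symm]
  apply Real.sqrt_le_sqrt; nlinarith [sq_nonneg ((supN a : ℝ))]

noncomputable def box (m : ℕ) : Finset (Fin 3 → ℤ) := Fintype.piFinset fun _ => Finset.Icc (-(m:ℤ)) m

lemma mem_box {m : ℕ} {a : Fin 3 → ℤ} : a ∈ box m ↔ supN a ≤ m := by
  simp only [box, Fintype.mem_piFinset, Finset.mem_Icc, supN, Finset.sup_le_iff,
    Finset.mem_univ, true_implies]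
  constructor
  · intro h i; have := h i; omega
  · intro h i; have := h i; omega

lemma card_box (m : ℕ) : (box m).card = (2*m+1)^3 := by
  rw [box, Fintype.card_piFinset]
  simp only [Int.card_Icc]
  have h : ((m:ℤ) + 1 - -(m:ℤ)).toNat = 2*m+1 := by omega
  rw [Finset.prod_const, h]
  simp

lemma box_mono {m n : ℕ} (h : m ≤ n) : box m ⊆ box n :=
  fun a ha => mem_box.mpr ((mem_box.mp ha).trans h)

lemma shell_card_le {m : ℕ} (hm : 1 ≤ m) : ((box m) \ (box (m-1))).card ≤ 26 * m^2 := by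
  rw [Finset.card_sdiff_of_subset (box_mono (by omega)), card_box, card_box]
  obtain ⟨j, rfl⟩ : ∃ j, m = j + 1 := ⟨m-1, by omega⟩
  have h0 : j + 1 - 1 = j := by omega
  rw [h0]
  have h1 : (2*(j+1)+1)^3 = (2*j+1)^3 + (24*j^2+48*j+26) := by ring
  rw [h1, Nat.add_sub_cancel_left]
  nlinarith

lemma mem_shell {m : ℕ} (hm : 1 ≤ m) {a : Fin 3 → ℤ} (h : supN a = m) :
    a ∈ box m \ box (m-1) := by
  rw [Finset.mem_sdiff, mem_box, mem_box]; omega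

/-- There is a constant `C > 0` such that for every `ε > 0`, every `u : ℤ³ → ℂ` with
`u 0 = 0` and `|u α| ≤ ε/|α|²` for `α ≠ 0`, and every `k ≠ 0`,
`|k|·∑_{|α| > 2|k|} |u α|·|u (k−α)| ≤ C·ε²` (the sum converging). -/
theorem high_frequency_tail_bound :
    ∃ C : ℝ, 0 < C ∧
      ∀ (ε : ℝ), 0 < ε →
        ∀ (u : (Fin 3 → ℤ) → ℂ), u 0 = 0 →
          (∀ α : Fin 3 → ℤ, α ≠ 0 → ‖u α‖ ≤ ε / (znorm α) ^ 2) →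
          ∀ k : Fin 3 → ℤ, k ≠ 0 →
            Summable (fun α : {a : Fin 3 → ℤ // 2 * znorm k < znorm a} =>
              ‖u α.1‖ * ‖u (k - α.1)‖) ∧
            znorm k * (∑' α : {a : Fin 3 → ℤ // 2 * znorm k < znorm a},
              ‖u α.1‖ * ‖u (k - α.1)‖) ≤ C * ε ^ 2 := by
  refine ⟨208, by norm_num, ?_⟩
  intro ε hε u hu0 hu k hk
  set f : {a : Fin 3 → ℤ // 2 * znorm k < znorm a} → ℝ :=
    fun α => ‖u α.1‖ * ‖u (k - α.1)‖ with hf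
  have hk1 : 1 ≤ znorm k := one_le_znorm hk
  have hkpos : 0 < znorm k := lt_of_lt_of_le one_pos hk1
  have key : ∀ α : {a : Fin 3 → ℤ // 2 * znorm k < znorm a},
      f α ≤ 4 * ε^2 * (((supN α.1 : ℝ))^4)⁻¹ ∧ znorm k < (supN α.1 : ℝ) := by
    rintro ⟨α, hα⟩
    have hαk : 2 * znorm k < znorm α := hα
    have hαpos : 0 < znorm α := lt_of_le_of_lt (by positivity) hαk
    have hα0 : α ≠ 0 := by
      intro h; rw [h] at hαpos; simp [znorm] at hαpos
    have htri : znorm α / 2 ≤ znorm (k - α) := by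
      have := znorm_triangle k α; linarith
    have hkα0 : k - α ≠ 0 := by
      intro h
      have hz : znorm (k - α) = 0 := by rw [h]; simp [znorm]
      rw [hz] at htri; linarith
    have hNpos : znorm k < (supN α : ℝ) := by
      have h2N := znorm_le_two_supN α; linarith
    have hNpos' : (0:ℝ) < (supN α : ℝ) := lt_trans hkpos hNpos
    refine ⟨?_, hNpos⟩
    have h1 : ‖u α‖ ≤ ε / znorm α ^ 2 := hu α hα0
    have h2 : ‖u (k - α)‖ ≤ ε / (znorm α / 2) ^ 2 := by
      refine (hu _ hkα0).trans ?_
      gcongr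
    have hprod : f ⟨α, hα⟩ ≤ (ε / znorm α ^ 2) * (ε / (znorm α / 2)^2) :=
      mul_le_mul h1 h2 (norm_nonneg _) (by positivity)
    have heq : (ε / znorm α ^ 2) * (ε / (znorm α / 2)^2) = 4 * ε^2 / znorm α ^ 4 := by
      field_simp; ring
    have hle : 4 * ε^2 / znorm α ^ 4 ≤ 4 * ε^2 * (((supN α:ℝ))^4)⁻¹ := by
      rw [div_eq_mul_inv]
      gcongr
      exact supN_le_znorm α
    rw [heq] at hprod
    exact hprod.trans hle
  have main : ∀ s : Finset {a : Fin 3 → ℤ // 2 * znorm k < znorm a},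
      ∑ α ∈ s, f α ≤ 208 * ε^2 / znorm k := by
    intro s
    set M : ℕ := ⌊znorm k⌋₊ + 1 with hM
    have hM1 : 1 ≤ M := by omega
    have hMk : znorm k < M := by
      have := Nat.lt_floor_add_one (znorm k)
      push_cast [hM]; linarith
    set n : ℕ := s.sup (fun α => supN α.1) with hn
    have hmaps : ∀ α ∈ s, supN α.1 ∈ Finset.Icc M n := by
      intro α hα
      rw [Finset.mem_Icc]
      constructor
      · have h1 : znorm k < (supN α.1 : ℝ) := (key α).2
        have h2 : ⌊znorm k⌋₊ < supN α.1 := (Nat.floor_lt (znorm_nonneg k)).mpr h1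
        omega
      · exact Finset.le_sup (f := fun α => supN α.1) hα
    have inner : ∀ m ∈ Finset.Icc M n,
        ∑ α ∈ s.filter (fun α => supN α.1 = m), 4*ε^2 * (((supN α.1:ℝ))^4)⁻¹
          ≤ 104 * ε^2 * (((m:ℝ))^2)⁻¹ := by
      intro m hm
      have hm1 : 1 ≤ m := le_trans hM1 (Finset.mem_Icc.mp hm).1
      have hmpos : (0:ℝ) < (m:ℝ) := by exact_mod_cast hm1
      have hcard : (s.filter fun α => supN α.1 = m).card ≤ 26 * m^2 := by
        refine le_trans (Finset.card_le_card_of_injOn Subtype.val ?_ ?_) (shell_card_le hm1)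
        · intro α hα
          exact mem_shell hm1 (Finset.mem_filter.mp hα).2
        · exact fun x _ y _ h => Subtype.ext h
      calc ∑ α ∈ s.filter (fun α => supN α.1 = m), 4*ε^2 * (((supN α.1:ℝ))^4)⁻¹
          = ∑ _α ∈ s.filter (fun α => supN α.1 = m), 4*ε^2 * (((m:ℝ))^4)⁻¹ :=
            Finset.sum_congr rfl (fun α hα => by rw [(Finset.mem_filter.mp hα).2])
        _ = (s.filter (fun α => supN α.1 = m)).card * (4*ε^2 * (((m:ℝ))^4)⁻¹) := by
            rw [Finset.sum_const, nsmul_eq_mul]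
        _ ≤ (26 * m^2 : ℕ) * (4*ε^2 * (((m:ℝ))^4)⁻¹) := by
            gcongr
        _ = 104 * ε^2 * (((m:ℝ))^2)⁻¹ := by
            push_cast
            field_simp
            ring
    have htail : ∑ m ∈ Finset.Icc M n, (((m:ℝ))^2)⁻¹ ≤ 2 / M := by
      have hsub : Finset.Icc M n ⊆ Finset.Ioo (M-1) (n+1) := by
        intro x hx; rw [Finset.mem_Icc] at hx; rw [Finset.mem_Ioo]; omega
      calc ∑ m ∈ Finset.Icc M n, (((m:ℝ))^2)⁻¹
          ≤ ∑ m ∈ Finset.Ioo (M-1) (n+1), (((m:ℝ))^2)⁻¹ :=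
            Finset.sum_le_sum_of_subset_of_nonneg hsub (fun _ _ _ => by positivity)
        _ ≤ 2 / (((M-1:ℕ):ℝ) + 1) := sum_Ioo_inv_sq_le _ _
        _ = 2 / M := by
            congr 1
            push_cast [Nat.cast_sub hM1]
            ring
    calc ∑ α ∈ s, f α
        ≤ ∑ α ∈ s, 4*ε^2 * (((supN α.1:ℝ))^4)⁻¹ :=
          Finset.sum_le_sum (fun α _ => (key α).1)
      _ = ∑ m ∈ Finset.Icc M n,
            ∑ α ∈ s.filter (fun α => supN α.1 = m), 4*ε^2 * (((supN α.1:ℝ))^4)⁻¹ :=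
          (Finset.sum_fiberwise_of_maps_to hmaps _).symm
      _ ≤ ∑ m ∈ Finset.Icc M n, 104 * ε^2 * (((m:ℝ))^2)⁻¹ := Finset.sum_le_sum inner
      _ = 104 * ε^2 * ∑ m ∈ Finset.Icc M n, (((m:ℝ))^2)⁻¹ := by rw [Finset.mul_sum]
      _ ≤ 104 * ε^2 * (2 / M) := by
          gcongr
      _ = 208 * ε^2 / M := by ring
      _ ≤ 208 * ε^2 / znorm k := by
          gcongr
  have hnonneg : 0 ≤ f := fun α => mul_nonneg (norm_nonneg _) (norm_nonneg _)
  have hsummable : Summable f := summable_of_sum_le hnonneg main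
  refine ⟨hsummable, ?_⟩
  have htsum : ∑' α, f α ≤ 208 * ε^2 / znorm k := Summable.tsum_le_of_sum_le hsummable main
  calc znorm k * ∑' α, f α ≤ znorm k * (208 * ε^2 / znorm k) := by
        exact mul_le_mul_of_nonneg_left htsum hkpos.le
    _ = 208 * ε^2 := by field_simp
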